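/- Let φ = φ₀·(1+r) where φ₀(t) = (1-ε_n)exp(iμ₀t - σ₀²t²/2) and r is a differentiable complex-valued function with 1 + r(t) ≠ 0. Then the functional σ₀²(φ;t) = -(d/dt|φ(t)|)/(t|φ(t)|) satisfies σ₀²(φ;t) - σ₀² = -(d/dt|1+r(t)|)/(t·|1+r(t)|), and hence |σ₀²(φ;t) - σ₀²| ≤ (|r'(t)|/t)·(1+|r(t)|)/|1+r(t)|². -/

import Mathlib

open Complex Real Filter

/-- The functional `σ₀²(f;t) = -(d/dt|f(t)|)/(t·|f(t)|)`. -/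
noncomputable def sigmaSqFun (f : ℝ → ℂ) (t : ℝ) : ℝ :=
  -(deriv (fun s : ℝ => ‖f s‖) t) / (t * ‖f t‖)

/-- The derivative of the norm of a function is bounded by the norm of the derivative. -/
lemma abs_deriv_norm_le (g : ℝ → ℂ) (t : ℝ) (b' : ℝ)
    (hB : HasDerivAt (fun s => ‖g s‖) b' t) (hg : HasDerivAt g (deriv g t) t) :
    |b'| ≤ ‖deriv g t‖ := by
  have h1 : Tendsto (fun s => |slope (fun s => ‖g s‖) t s|) (nhdsWithin t {t}ᶜ) (nhds |b'|) :=
    (hasDerivAt_iff_tendsto_slope.mp hB).abs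
  have h2 : Tendsto (fun s => ‖slope g t s‖) (nhdsWithin t {t}ᶜ) (nhds ‖deriv g t‖) :=
    (hasDerivAt_iff_tendsto_slope.mp hg).norm
  refine le_of_tendsto_of_tendsto' h1 h2 fun s => ?_
  simp only [slope_def_field, slope, vsub_eq_sub, smul_eq_mul]
  rw [abs_mul, norm_smul, Real.norm_eq_abs]
  exact mul_le_mul_of_nonneg_left (abs_norm_sub_norm_le _ _) (abs_nonneg _)

theorem stmt5 (εn μ₀ σ₀ : ℝ) (hε : 0 < εn) (hε1 : εn < 1) (hσ : 0 < σ₀)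
    (r : ℝ → ℂ) (hr : Differentiable ℝ r)
    (φ : ℝ → ℂ)
    (hφ : ∀ s : ℝ, φ s =
      (1 - εn) * Complex.exp (Complex.I * μ₀ * s - σ₀ ^ 2 * s ^ 2 / 2) * (1 + r s))
    (t : ℝ) (ht : 0 < t) (hr0 : 1 + r t ≠ 0) :
    sigmaSqFun φ t - σ₀ ^ 2 =
      -(deriv (fun s : ℝ => ‖1 + r s‖) t) / (t * ‖1 + r t‖) ∧
    |sigmaSqFun φ t - σ₀ ^ 2| ≤
      (‖deriv r t‖ / t) * (1 + ‖r t‖) / (‖1 + r t‖) ^ 2 := by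
  set A : ℝ → ℝ := fun s => (1 - εn) * Real.exp (-(σ₀ ^ 2 * s ^ 2) / 2) with hA_def
  set B : ℝ → ℝ := fun s => ‖1 + r s‖ with hB_def
  have hg : Differentiable ℝ (fun s => 1 + r s) := (differentiable_const 1).add hr
  have habs : (fun s : ℝ => ‖φ s‖) = fun s => A s * B s := by
    funext s
    rw [hφ s, norm_mul, norm_mul, Complex.norm_exp]
    have h1 : ‖(1 : ℂ) - (εn : ℂ)‖ = 1 - εn := by
      rw [show (1 : ℂ) - (εn : ℂ) = ((1 - εn : ℝ) : ℂ) by push_cast; ring,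
        Complex.norm_real, Real.norm_eq_abs, abs_of_pos (by linarith)]
    have h2 : (Complex.I * μ₀ * s - σ₀ ^ 2 * s ^ 2 / 2).re = -(σ₀ ^ 2 * s ^ 2) / 2 := by
      simp [Complex.div_re, ← Complex.ofReal_pow]
      ring
    rw [h1, h2]
  have hBd : DifferentiableAt ℝ B t := by
    have := (hg.differentiableAt (x := t)).norm ℝ hr0
    simp only [hB_def]
    exact this
  set b' : ℝ := deriv B t with hb'_def
  have hB' : HasDerivAt B b' t := hBd.hasDerivAt
  have hA' : HasDerivAt A (A t * (-(σ₀ ^ 2 * t))) t := by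
    have h1 : HasDerivAt (fun s : ℝ => -(σ₀ ^ 2 * s ^ 2) / 2) (-(σ₀ ^ 2 * t)) t := by
      have := (hasDerivAt_pow 2 t).const_mul (σ₀ ^ 2)
      have := (this.neg).div_const 2
      refine this.congr_deriv ?_
      ring
    have := (h1.exp).const_mul (1 - εn)
    refine this.congr_deriv ?_
    simp [hA_def]
    ring
  have hAB : HasDerivAt (fun s => A s * B s) (A t * (-(σ₀ ^ 2 * t)) * B t + A t * b') t :=
    hA'.mul hB'
  have hderiv : deriv (fun s : ℝ => ‖φ s‖) t
      = A t * (-(σ₀ ^ 2 * t)) * B t + A t * b' := by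
    rw [habs]; exact hAB.deriv
  have hAt : 0 < A t := mul_pos (by linarith) (Real.exp_pos _)
  have hBt : 0 < B t := by
    simpa [hB_def] using (norm_pos_iff.mpr hr0)
  have hmain : sigmaSqFun φ t - σ₀ ^ 2 = -b' / (t * B t) := by
    rw [sigmaSqFun, hderiv]
    have hφt : ‖φ t‖ = A t * B t := congrFun habs t
    rw [hφt]
    field_simp
    ring
  have hBfun : (fun s : ℝ => ‖1 + r s‖) = B := rfl
  refine ⟨by rw [hmain], ?_⟩
  rw [hmain]
  have hb'le : |b'| ≤ ‖deriv r t‖ := by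
    have hgd : HasDerivAt (fun s => 1 + r s) (deriv (fun s => 1 + r s) t) t :=
      (hg.differentiableAt).hasDerivAt
    have hBnorm : HasDerivAt (fun s => ‖(fun u => 1 + r u) s‖) b' t := by
      simpa [hB_def] using hB'
    have := abs_deriv_norm_le (fun s => 1 + r s) t b' hBnorm hgd
    have hde : deriv (fun s => 1 + r s) t = deriv r t := by
      simpa using (((hr t).hasDerivAt).const_add (1 : ℂ)).deriv
    rwa [hde] at this
  have hBle : B t ≤ 1 + ‖r t‖ := by
    simpa [hB_def] using (norm_add_le 1 (r t))
  have h1 : |(-b' / (t * B t))| = |b'| / (t * B t) := by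
    rw [abs_div, abs_neg, abs_of_pos (mul_pos ht hBt)]
  rw [h1]
  rw [div_le_iff₀ (mul_pos ht hBt)]
  have key : ‖deriv r t‖ / t * (1 + ‖r t‖) / B t ^ 2 * (t * B t)
      = ‖deriv r t‖ * ((1 + ‖r t‖) / B t) := by
    field_simp
  rw [key]
  calc |b'| ≤ ‖deriv r t‖ := hb'le
    _ = ‖deriv r t‖ * 1 := by ring
    _ ≤ ‖deriv r t‖ * ((1 + ‖r t‖) / B t) := by
        refine mul_le_mul_of_nonneg_left ?_ (norm_nonneg _)
        rw [le_div_iff₀ hBt, one_mul]; exact hBle
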